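/- arXiv:2006.10339 — 2 statements merged into one kernel-verified Lean document; each statement's English description precedes it below -/
import Mathlib

section
/- Let p be a prime and let P be a finite p-group acting faithfully and transitively on a finite set Ω (i.e. P is a transitive permutation p-group). Then P contains a sharply transitive subset: there exists C ⊆ P such that for every pair (α, β) ∈ Ω × Ω there is exactly one c ∈ C with c·α = β. -/
universe v

/-- Pull back a sharply transitive subset along a surjective action-compatible hom. -/
private lemma stmt18.pull {P G Ω : Type*} [Group P] [Group G] [MulAction P Ω] [MulAction G Ω]
    (f : P →* G) (hf : Function.Surjective f) (hc : ∀ (g : P) (ω : Ω), f g • ω = g • ω)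
    (h : ∃ C : Set G, ∀ α β : Ω, ∃! c, c ∈ C ∧ c • α = β) :
    ∃ C : Set P, ∀ α β : Ω, ∃! c, c ∈ C ∧ c • α = β := by
  obtain ⟨C, hC⟩ := h
  choose s hs using hf
  refine ⟨s '' C, fun α β => ?_⟩
  obtain ⟨c, ⟨hcC, hcs⟩, hun⟩ := hC α β
  refine ⟨s c, ⟨⟨c, hcC, rfl⟩, by rw [← hc, hs, hcs]⟩, ?_⟩
  rintro y ⟨⟨x, hxC, rfl⟩, hy⟩
  rw [← hc, hs] at hy
  rw [hun x ⟨hxC, hy⟩]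

private lemma stmt18.aux (p : ℕ) (hp : p.Prime) : ∀ (n : ℕ) (P : Type v) [Group P] [Finite P],
    IsPGroup p P → ∀ (Ω : Type v) [Finite Ω] [MulAction P Ω] [FaithfulSMul P Ω]
    [MulAction.IsPretransitive P Ω], Nat.card Ω = n →
    ∃ C : Set P, ∀ α β : Ω, ∃! c, c ∈ C ∧ c • α = β := by
  intro n
  induction n using Nat.strong_induction_on with
  | _ n ih =>
  intro P _ _ hP Ω _ _ _ _ hcard
  haveI := Fact.mk hp
  rcases le_or_gt (Nat.card Ω) 1 with hle | hlt
  · -- trivial case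
    have : Subsingleton Ω := Finite.card_le_one_iff_subsingleton.mp hle
    refine ⟨{1}, fun α β => ⟨1, ⟨rfl, by rw [one_smul]; exact Subsingleton.elim _ _⟩, ?_⟩⟩
    rintro y ⟨hy, -⟩; exact hy
  · -- nontrivial case
    have hΩnt : Nontrivial Ω := Finite.one_lt_card_iff_nontrivial.mp hlt
    obtain ⟨ω₁, ω₂, hne⟩ := hΩnt
    have hPnt : Nontrivial P := by
      obtain ⟨g, hg⟩ := MulAction.exists_smul_eq P ω₁ ω₂
      refine ⟨g, 1, fun h => hne ?_⟩
      rw [← hg, h, one_smul]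
    have hz := IsPGroup.center_nontrivial hP
    obtain ⟨z, hz1⟩ := exists_ne (1 : Subgroup.center P)
    have hzc : (z : P) ∈ Subgroup.center P := z.2
    have hzne : (z : P) ≠ 1 := fun h => hz1 (Subtype.ext h)
    -- central elements fixing a point are trivial
    have hfree : ∀ h : P, h ∈ Subgroup.center P → ∀ ω : Ω, h • ω = ω → h = 1 := by
      intro h hh ω hfix
      refine eq_of_smul_eq_smul (α := Ω) fun ω' => ?_
      obtain ⟨g, hg⟩ := MulAction.exists_smul_eq P ω ω'
      rw [one_smul, ← hg, ← mul_smul, ← (Subgroup.mem_center_iff.mp hh g), mul_smul, hfix]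
    set H : Subgroup P := Subgroup.zpowers (z : P) with hH
    have hHc : H ≤ Subgroup.center P := Subgroup.zpowers_le.mpr hzc
    -- quotient by orbits of H
    set Ω' := MulAction.orbitRel.Quotient H Ω with hΩ'
    letI act : MulAction P Ω' :=
      { smul := fun g => Quotient.map' (fun x => g • x) (by
          rintro a b ⟨h, rfl⟩
          refine ⟨h, ?_⟩
          show (h : P) • (g • b) = g • ((h : P) • b)
          rw [← mul_smul, ← mul_smul, ← Subgroup.mem_center_iff.mp (hHc h.2) g])
        one_smul := fun x => by
          induction x using Quotient.inductionOn' with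
          | _ a => exact congrArg Quotient.mk'' (one_smul P a)
        mul_smul := fun g₁ g₂ x => by
          induction x using Quotient.inductionOn' with
          | _ a => exact congrArg Quotient.mk'' (mul_smul g₁ g₂ a) }
    have hmk : ∀ (g : P) (x : Ω), g • (Quotient.mk'' x : Ω') = Quotient.mk'' (g • x) :=
      fun g x => rfl
    have hHmk : ∀ (h : H) (x : Ω), (Quotient.mk'' ((h : P) • x) : Ω') = Quotient.mk'' x := by
      intro h x
      exact Quotient.sound' ⟨h, rfl⟩
    letI : MulAction.IsPretransitive P Ω' := by
      constructor
      intro a b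
      induction a using Quotient.inductionOn' with
      | _ x =>
      induction b using Quotient.inductionOn' with
      | _ y =>
      obtain ⟨g, hg⟩ := MulAction.exists_smul_eq P x y
      exact ⟨g, by rw [hmk, hg]⟩
    -- cardinality drops
    have hcard' : Nat.card Ω' < n := by
      rw [← hcard]
      letI := Fintype.ofFinite Ω
      letI := Fintype.ofFinite Ω'
      rw [Nat.card_eq_fintype_card, Nat.card_eq_fintype_card]
      refine Fintype.card_lt_of_surjective_not_injective (Quotient.mk'' : Ω → Ω')
        (Quotient.mk''_surjective) fun hinj => ?_
      have : (z : P) • ω₁ = ω₁ := hinj (hHmk ⟨z, Subgroup.mem_zpowers _⟩ ω₁)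
      exact hzne (hfree _ hzc _ this)
    -- pass to the image in Perm Ω'
    set G := (MulAction.toPermHom P Ω').range with hG
    letI : FaithfulSMul G Ω' := ⟨by
      rintro ⟨x, hx⟩ ⟨y, hy⟩ h
      exact Subtype.ext (Equiv.ext h)⟩
    letI : MulAction.IsPretransitive G Ω' := by
      constructor
      intro a b
      obtain ⟨g, hg⟩ := MulAction.exists_smul_eq P a b
      exact ⟨⟨MulAction.toPermHom P Ω' g, g, rfl⟩, hg⟩
    have hGp : IsPGroup p G :=
      hP.of_surjective (MulAction.toPermHom P Ω').rangeRestrict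
        (MulAction.toPermHom P Ω').rangeRestrict_surjective
    obtain ⟨C₀, hC₀⟩ : ∃ C : Set P, ∀ α β : Ω', ∃! c, c ∈ C ∧ c • α = β := by
      refine stmt18.pull (MulAction.toPermHom P Ω').rangeRestrict
        (MulAction.toPermHom P Ω').rangeRestrict_surjective (fun g ω => rfl)
        (ih _ hcard' G hGp Ω' rfl)
    -- assemble the sharply transitive set
    refine ⟨{g | ∃ h : H, ∃ c ∈ C₀, g = (h : P) * c}, fun α β => ?_⟩
    obtain ⟨c, ⟨hcC, hcs⟩, hun⟩ := hC₀ (Quotient.mk'' α) (Quotient.mk'' β)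
    rw [hmk] at hcs
    obtain ⟨h, hh⟩ : ∃ h : H, (h : P) • (c • α) = β := by
      obtain ⟨h, hh⟩ := (MulAction.orbitRel (H : Subgroup P) Ω).iseqv.symm (Quotient.exact' hcs)
      exact ⟨h, hh⟩
    refine ⟨(h : P) * c, ⟨⟨h, c, hcC, rfl⟩, by rw [mul_smul, hh]⟩, ?_⟩
    rintro y ⟨⟨h', c', hc'C, rfl⟩, hy⟩
    rw [mul_smul] at hy
    have hc' : c' = c := by
      refine hun c' ⟨hc'C, ?_⟩
      rw [hmk, ← hHmk h' (c' • α), hy]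
    rw [hc'] at hy
    have h1 : (h : P)⁻¹ * (h' : P) = 1 := by
      refine hfree _ (Subgroup.mul_mem _ (Subgroup.inv_mem _ (hHc h.2)) (hHc h'.2)) (c • α) ?_
      rw [mul_smul, hy, ← hh, inv_smul_smul]
    rw [hc', ← inv_mul_eq_one.mp h1]

/-- Every transitive permutation `p`-group contains a sharply
transitive subset. -/
theorem stmt18 (p : ℕ) (hp : p.Prime) (P : Type*) [Group P] [Finite P]
    (hP : IsPGroup p P) (Ω : Type*) [Finite Ω] [MulAction P Ω]
    [FaithfulSMul P Ω] [MulAction.IsPretransitive P Ω] :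
    ∃ C : Set P, ∀ α β : Ω, ∃! c, c ∈ C ∧ c • α = β := by
  set G := (MulAction.toPermHom P Ω).range
  letI : FaithfulSMul G Ω := ⟨by
    rintro ⟨x, hx⟩ ⟨y, hy⟩ h
    exact Subtype.ext (Equiv.ext h)⟩
  letI : MulAction.IsPretransitive G Ω := by
    constructor
    intro a b
    obtain ⟨g, hg⟩ := MulAction.exists_smul_eq P a b
    exact ⟨⟨MulAction.toPermHom P Ω g, g, rfl⟩, hg⟩
  have hGp : IsPGroup p G :=
    hP.of_surjective (MulAction.toPermHom P Ω).rangeRestrict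
      (MulAction.toPermHom P Ω).rangeRestrict_surjective
  exact stmt18.pull (MulAction.toPermHom P Ω).rangeRestrict
    (MulAction.toPermHom P Ω).rangeRestrict_surjective (fun g ω => rfl)
    (stmt18.aux p hp _ G hGp Ω rfl)
end

section
/- Let p be a prime, k ≥ 1, and let G be a transitive permutation group on a finite set Ω with |Ω| = p^k. Then G has the EKR property: for every intersecting set S ⊆ G and every ω ∈ Ω, |S| ≤ |G_ω|. -/
open MulAction

section CliqueLemma

variable {p : ℕ}

/-- In a finite `p`-group acting transitively on a set of size `p ^ k`, there is a
"sharply transitive set": `p ^ k` elements that pairwise disagree at every point. -/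
private lemma clique_exists (hp : p.Prime) (H : Type*) [Group H] [Finite H]
    (hH : IsPGroup p H) :
    ∀ (k : ℕ) (Ω : Type*) [Fintype Ω] [MulAction H Ω], IsPretransitive H Ω →
      Fintype.card Ω = p ^ k →
      ∃ C : Finset H, C.card = p ^ k ∧
        ∀ x ∈ C, ∀ y ∈ C, x ≠ y → ∀ α : Ω, x • α ≠ y • α := by
  haveI : Fact p.Prime := ⟨hp⟩
  classical
  intro k
  induction k with
  | zero =>
    intro Ω _ _ _ _
    exact ⟨{1}, by simp, by simp⟩
  | succ k IH =>
    intro Ω _ _ htrans hcard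
    haveI : Nonempty Ω := Fintype.card_pos_iff.mp (by rw [hcard]; exact pow_pos hp.pos _)
    set φ := MulAction.toPermHom H Ω with hφ
    -- the image of `H` in `Perm Ω` is a nontrivial finite `p`-group
    have hQ : IsPGroup p φ.range :=
      hH.of_surjective φ.rangeRestrict φ.rangeRestrict_surjective
    haveI : Nontrivial φ.range := by
      have h1 : 1 < Fintype.card Ω := by
        rw [hcard]; exact Nat.one_lt_pow k.succ_ne_zero hp.one_lt
      obtain ⟨α0, β0, hne⟩ := Fintype.one_lt_card_iff.mp h1
      obtain ⟨h0, hh0⟩ := htrans.exists_smul_eq α0 β0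
      refine ⟨⟨φ h0, ⟨h0, rfl⟩⟩, 1, fun h => hne ?_⟩
      have : φ h0 = 1 := by simpa using congrArg Subtype.val h
      calc α0 = (φ h0) α0 := by rw [this]; rfl
        _ = β0 := by simpa [hφ] using hh0
    -- find a central element `σ` of order `p` in the image
    haveI := hQ.center_nontrivial
    obtain ⟨⟨g, hgc⟩, hg1⟩ := exists_ne (1 : Subgroup.center φ.range)
    have hg : g ≠ 1 := fun h => hg1 (Subtype.ext h)
    obtain ⟨n, hn⟩ := hQ g
    obtain ⟨m, hmle, hm⟩ := (Nat.dvd_prime_pow hp).mp (orderOf_dvd_of_pow_eq_one hn)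
    have hm0 : m ≠ 0 := by
      rintro rfl
      exact hg (orderOf_eq_one_iff.mp (by simpa using hm))
    set z : φ.range := g ^ p ^ (m - 1) with hzdef
    have hz1 : z ≠ 1 := by
      rw [hzdef, Ne, ← orderOf_dvd_iff_pow_eq_one, hm]
      rw [Nat.pow_dvd_pow_iff_le_right hp.one_lt]
      omega
    have hzp : z ^ p = 1 := by
      have hpm : p ^ (m - 1) * p = p ^ m := by
        rw [← pow_succ]; congr 1; omega
      rw [hzdef, ← pow_mul, hpm, ← hm, pow_orderOf_eq_one]
    have hzc : z ∈ Subgroup.center φ.range := (Subgroup.center φ.range).pow_mem hgc _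
    set σ : Equiv.Perm Ω := (z : Equiv.Perm Ω) with hσdef
    obtain ⟨w, hw⟩ := z.2
    have hσ1 : σ ≠ 1 := fun h => hz1 (Subtype.ext h)
    have hσp : σ ^ p = 1 := by
      have := congrArg Subtype.val hzp
      simpa [hσdef] using this
    have horder : orderOf σ = p := orderOf_eq_prime hσp hσ1
    have hcomm : ∀ x : H, Commute σ (φ x) := by
      intro x
      rw [Subgroup.mem_center_iff] at hzc
      have := congrArg Subtype.val (hzc ⟨φ x, ⟨x, rfl⟩⟩)
      exact (this : φ x * σ = σ * φ x).symm
    have hφapp : ∀ (x : H) (α : Ω), φ x α = x • α := fun x α => rfl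
    -- a power of σ fixing a point is the identity
    have hfixz : ∀ (i : ℤ) (α : Ω), (σ ^ i) α = α → (p : ℤ) ∣ i := by
      intro i α hα
      have h1 : σ ^ i = 1 := by
        ext β
        obtain ⟨x, hx⟩ := htrans.exists_smul_eq α β
        have hc : Commute (σ ^ i) (φ x) := (hcomm x).zpow_left i
        calc (σ ^ i) β = (σ ^ i) (φ x α) := by rw [hφapp, hx]
          _ = ((σ ^ i) * φ x) α := rfl
          _ = (φ x * (σ ^ i)) α := by rw [hc]
          _ = φ x α := by rw [Equiv.Perm.mul_apply, hα]
          _ = β := by rw [hφapp, hx]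
      rw [← horder]
      exact orderOf_dvd_iff_zpow_eq_one.mpr h1
    -- the quotient of Ω by the orbits of σ
    set s : Setoid Ω := ⟨fun a b => ∃ i : ℤ, (σ ^ i) a = b,
      ⟨fun a => ⟨0, by simp⟩,
       fun {a b} ⟨i, hi⟩ => ⟨-i, by rw [← hi, zpow_neg]; exact Equiv.symm_apply_apply _ _⟩,
       fun {a b c} ⟨i, hi⟩ ⟨j, hj⟩ => ⟨j + i, by rw [zpow_add, Equiv.Perm.mul_apply, hi, hj]⟩⟩⟩
      with hsdef
    letI Ω' := Quotient s
    haveI : Fintype Ω' := Fintype.ofFinite _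
    have hwd : ∀ (x : H) (a b : Ω), (∃ i : ℤ, (σ ^ i) a = b) →
        (∃ i : ℤ, (σ ^ i) (x • a) = x • b) := by
      rintro x a b ⟨i, hi⟩
      refine ⟨i, ?_⟩
      have hc : Commute (σ ^ i) (φ x) := (hcomm x).zpow_left i
      calc (σ ^ i) (x • a) = ((σ ^ i) * φ x) a := rfl
        _ = (φ x * (σ ^ i)) a := by rw [hc]
        _ = φ x ((σ ^ i) a) := rfl
        _ = x • b := by rw [hi, hφapp]
    letI act : MulAction H Ω' :=
      { smul := fun x => Quotient.map' (fun α => x • α) (fun a b h => hwd x a b h)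
        one_smul := fun q => Quotient.inductionOn q (fun a => by
          show Quotient.map' _ _ _ = _
          rw [Quotient.map'_mk'']
          simp)
        mul_smul := fun x y q => Quotient.inductionOn q (fun a => by
          show Quotient.map' _ _ _ = Quotient.map' _ _ (Quotient.map' _ _ _)
          rw [Quotient.map'_mk'', Quotient.map'_mk'', Quotient.map'_mk'', mul_smul]) }
    have hsmul' : ∀ (x : H) (a : Ω), x • (Quotient.mk s a : Ω') = Quotient.mk s (x • a) :=
      fun x a => rfl
    haveI htrans' : IsPretransitive H Ω' := by
      constructor
      intro q r
      refine Quotient.inductionOn₂ q r (fun a b => ?_)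
      obtain ⟨x, hx⟩ := htrans.exists_smul_eq a b
      exact ⟨x, by rw [show (Quotient.mk s a : Ω') = _ from rfl, hsmul', hx]⟩
    -- counting: card Ω' * p = card Ω
    have hmodp : ∀ i j : ZMod p, (p : ℤ) ∣ (i.val : ℤ) - (j.val : ℤ) → i = j := by
      intro i j hd
      have := (ZMod.intCast_zmod_eq_zero_iff_dvd _ p).mpr hd
      push_cast at this
      rw [ZMod.natCast_val, ZMod.natCast_val, ZMod.cast_id, ZMod.cast_id,
        sub_eq_zero] at this
      exact this
    have hfdiff : ∀ (a b : ℕ) (α β : Ω), (σ ^ a) α = (σ ^ b) β →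
        (σ ^ ((a : ℤ) - (b : ℤ))) α = β := by
      intro a b α β h
      have h2 : σ ^ ((a : ℤ) - b) = (σ ^ (b : ℤ))⁻¹ * σ ^ (a : ℤ) := by
        rw [← zpow_neg, ← zpow_add, sub_eq_neg_add]
      rw [h2, Equiv.Perm.mul_apply, zpow_natCast σ a, h, ← zpow_natCast σ b,
        Equiv.Perm.inv_def, Equiv.symm_apply_apply]
    let f : Ω' × ZMod p → Ω := fun q => (σ ^ (q.2.val)) q.1.out
    have hfbij : Function.Bijective f := by
      constructor
      · rintro ⟨b, i⟩ ⟨c, j⟩ h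
        simp only [f] at h
        have hbc : b = c := by
          rw [← Quotient.out_eq b, ← Quotient.out_eq c]
          exact Quotient.sound ⟨(i.val : ℤ) - (j.val : ℤ), hfdiff _ _ _ _ h⟩
        subst hbc
        have hij : i = j := by
          apply hmodp
          apply hfixz _ ((σ ^ (j.val : ℤ)) b.out)
          rw [← Equiv.Perm.mul_apply, ← zpow_add, sub_add_cancel, zpow_natCast,
            zpow_natCast, h]
        rw [hij]
      · intro α
        obtain ⟨nn, hnn⟩ : ∃ i : ℤ, (σ ^ i) (Quotient.mk s α).out = α :=
          Quotient.exact (Quotient.out_eq (Quotient.mk s α))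
        set i : ZMod p := ((nn : ZMod p)) with hidef
        refine ⟨(Quotient.mk s α, i), ?_⟩
        have hd : (p : ℤ) ∣ nn - (i.val : ℤ) := by
          rw [← ZMod.intCast_zmod_eq_zero_iff_dvd]
          push_cast
          rw [ZMod.natCast_val, ZMod.cast_id, hidef, sub_self]
        obtain ⟨t, ht⟩ := hd
        have hσt : σ ^ ((p : ℤ) * t) = 1 := by
          rw [zpow_mul, zpow_natCast, hσp, one_zpow]
        show (σ ^ (i.val)) (Quotient.mk s α).out = α
        have hσeq : σ ^ (i.val) = σ ^ nn := by
          have h1 : (nn : ℤ) = (i.val : ℤ) + (p : ℤ) * t := by omega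
          calc σ ^ (i.val) = σ ^ ((i.val : ℤ)) := (zpow_natCast _ _).symm
            _ = σ ^ ((i.val : ℤ) + (p : ℤ) * t) := by rw [zpow_add, hσt, mul_one]
            _ = σ ^ nn := by rw [← h1]
        rw [hσeq, hnn]
    have hcard' : Fintype.card Ω' * p = p ^ (k + 1) := by
      have := Fintype.card_congr (Equiv.ofBijective f hfbij)
      rw [Fintype.card_prod, ZMod.card] at this
      rw [this, hcard]
    have hcardΩ' : Fintype.card Ω' = p ^ k := by
      have : Fintype.card Ω' * p = p ^ k * p := by rw [hcard', pow_succ]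
      exact Nat.eq_of_mul_eq_mul_right hp.pos this
    obtain ⟨C', hC'card, hC'⟩ := IH Ω' htrans' hcardΩ'
    -- how powers of w act
    have hwpow : ∀ (a : ℕ) (α : Ω), (w ^ a) • α = (σ ^ a) α := by
      intro a α
      rw [← hφapp, map_pow, hw]
    -- the key disagreement property
    have keydis : ∀ x ∈ C', ∀ y ∈ C', ∀ i j : ZMod p, (x, i) ≠ (y, j) →
        ∀ α : Ω, (x * w ^ i.val) • α ≠ (y * w ^ j.val) • α := by
      intro x hx y hy i j hne α heq
      rw [mul_smul, mul_smul, hwpow, hwpow] at heq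
      by_cases hxy : x = y
      · subst hxy
        have h2 : (σ ^ i.val) α = (σ ^ j.val) α := MulAction.injective x heq
        have hij : i = j := by
          apply hmodp
          apply hfixz _ ((σ ^ (j.val : ℤ)) α)
          rw [← Equiv.Perm.mul_apply, ← zpow_add, sub_add_cancel, zpow_natCast,
            zpow_natCast, h2]
        exact hne (by rw [hij])
      · apply hC' x hx y hy hxy (Quotient.mk s α)
        have e1 : (Quotient.mk s ((σ ^ i.val) α) : Ω') = Quotient.mk s α :=
          Quotient.sound ⟨-(i.val : ℤ), by
            rw [← zpow_natCast, ← Equiv.Perm.mul_apply, ← zpow_add, neg_add_cancel,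
              zpow_zero, Equiv.Perm.one_apply]⟩
        have e2 : (Quotient.mk s ((σ ^ j.val) α) : Ω') = Quotient.mk s α :=
          Quotient.sound ⟨-(j.val : ℤ), by
            rw [← zpow_natCast, ← Equiv.Perm.mul_apply, ← zpow_add, neg_add_cancel,
              zpow_zero, Equiv.Perm.one_apply]⟩
        calc x • (Quotient.mk s α : Ω') = x • (Quotient.mk s ((σ ^ i.val) α)) := by rw [e1]
          _ = Quotient.mk s (x • (σ ^ i.val) α) := hsmul' _ _
          _ = Quotient.mk s (y • (σ ^ j.val) α) := by rw [heq]
          _ = y • (Quotient.mk s ((σ ^ j.val) α)) := (hsmul' _ _).symm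
          _ = y • (Quotient.mk s α : Ω') := by rw [e2]
    -- build the clique
    set C : Finset H := (C' ×ˢ (Finset.univ : Finset (ZMod p))).image
      (fun q => q.1 * w ^ q.2.val) with hCdef
    have hmem : ∀ q : H × ZMod p, q ∈ C' ×ˢ (Finset.univ : Finset (ZMod p)) → q.1 ∈ C' :=
      fun q hq => (Finset.mem_product.mp hq).1
    have hinj : Set.InjOn (fun q : H × ZMod p => q.1 * w ^ q.2.val)
        ((C' ×ˢ (Finset.univ : Finset (ZMod p)) : Finset (H × ZMod p)) :
          Set (H × ZMod p)) := by
      rintro ⟨x, i⟩ hxi ⟨y, j⟩ hyj h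
      by_contra hne
      obtain ⟨α⟩ := ‹Nonempty Ω›
      dsimp only at h
      exact keydis x (hmem _ (Finset.mem_coe.mp hxi)) y (hmem _ (Finset.mem_coe.mp hyj))
        i j hne α (by rw [h])
    refine ⟨C, ?_, ?_⟩
    · rw [hCdef, Finset.card_image_of_injOn hinj, Finset.card_product, Finset.card_univ,
        ZMod.card, hC'card, pow_succ]
    · intro a ha b hb hab α
      rw [hCdef, Finset.mem_image] at ha hb
      obtain ⟨⟨x, i⟩, hxi, rfl⟩ := ha
      obtain ⟨⟨y, j⟩, hyj, rfl⟩ := hb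
      apply keydis x (hmem _ hxi) y (hmem _ hyj) i j
      intro hpair
      apply hab
      rw [Prod.mk.injEq] at hpair
      rw [hpair.1, hpair.2]

end CliqueLemma

/-- Let `p` be a prime, `k ≥ 1`, and let `G` be a transitive
permutation group on a finite set `Ω` with `|Ω| = p ^ k`.  Then `G` has the EKR
property: every intersecting set `S ⊆ G` satisfies `|S| ≤ |G_ω|`. -/
theorem stmt19 (p k : ℕ) (hp : p.Prime) (hk : 1 ≤ k)
    {Ω : Type*} [Fintype Ω] (hΩ : Fintype.card Ω = p ^ k)
    {G : Type*} [Group G] [Fintype G] [MulAction G Ω] [FaithfulSMul G Ω]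
    [MulAction.IsPretransitive G Ω]
    (S : Set G) (hS : ∀ x ∈ S, ∀ y ∈ S, ∃ α : Ω, x • α = y • α) (ω : Ω) :
    S.ncard ≤ Nat.card (MulAction.stabilizer G ω) := by
  classical
  haveI : Fact p.Prime := ⟨hp⟩
  -- the order of G
  have hcardG : Nat.card G = p ^ k * Nat.card (MulAction.stabilizer G ω) := by
    rw [← Subgroup.index_mul_card (MulAction.stabilizer G ω),
      MulAction.index_stabilizer_of_transitive, Nat.card_eq_fintype_card, hΩ]
  -- a Sylow p-subgroup acts transitively on Ω
  obtain ⟨P⟩ : Nonempty (Sylow p G) := inferInstance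
  set Q : Subgroup G := (P : Subgroup G) with hQdef
  have hcardP : Nat.card Q = p ^ (Nat.card G).factorization p := P.card_eq_multiplicity
  obtain ⟨m, hm⟩ := (IsPGroup.iff_card.mp
    (P.isPGroup'.to_subgroup (MulAction.stabilizer Q ω)) : ∃ n, _)
  have hPs_dvd : Nat.card (MulAction.stabilizer Q ω) ∣
      Nat.card (MulAction.stabilizer G ω) := by
    refine Subgroup.card_dvd_of_injective
      (MonoidHom.mk' (fun g => ⟨(g.1 : G), ?_⟩) (fun a b => rfl)) ?_
    · rw [MulAction.mem_stabilizer_iff]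
      have := g.2
      rwa [MulAction.mem_stabilizer_iff, Subgroup.smul_def] at this
    · intro a b hab
      simp only [MonoidHom.mk'_apply] at hab
      have h2 := congrArg Subtype.val hab
      exact Subtype.ext (Subtype.ext h2)
  have hdvd2 : p ^ (k + m) ∣ Nat.card G := by
    rw [hcardG, pow_add]
    exact mul_dvd_mul_left _ (hm ▸ hPs_dvd)
  have hla : k + m ≤ (Nat.card G).factorization p :=
    (Nat.Prime.pow_dvd_iff_le_factorization hp Nat.card_pos.ne').mp hdvd2
  have horbeq : MulAction.orbit Q ω = Set.univ := by
    have hos : (MulAction.orbit Q ω).ncard * Nat.card (MulAction.stabilizer Q ω) =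
        Nat.card Q := by
      rw [← MulAction.index_stabilizer, Subgroup.index_mul_card]
    have hle : (MulAction.orbit Q ω).ncard ≤ p ^ k := by
      have := Set.ncard_le_ncard (Set.subset_univ (MulAction.orbit Q ω)) Set.finite_univ
      rwa [Set.ncard_univ, Nat.card_eq_fintype_card, hΩ] at this
    have hge : p ^ k ≤ (MulAction.orbit Q ω).ncard := by
      have h1 : (MulAction.orbit Q ω).ncard * p ^ m =
          p ^ ((Nat.card G).factorization p - m) * p ^ m := by
        rw [← pow_add, Nat.sub_add_cancel (by omega), ← hcardP, ← hos, hm]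
      have h2 : (MulAction.orbit Q ω).ncard = p ^ ((Nat.card G).factorization p - m) :=
        Nat.eq_of_mul_eq_mul_right (pow_pos hp.pos m) h1
      rw [h2]
      exact Nat.pow_le_pow_right hp.pos (by omega)
    refine Set.eq_of_subset_of_ncard_le (Set.subset_univ _) ?_ (Set.toFinite _)
    rw [Set.ncard_univ, Nat.card_eq_fintype_card, hΩ]
    exact le_trans hge le_rfl
  haveI htransP : MulAction.IsPretransitive Q Ω := by
    constructor
    intro a b
    have ha : a ∈ MulAction.orbit Q ω := horbeq ▸ Set.mem_univ a
    have hb : b ∈ MulAction.orbit Q ω := horbeq ▸ Set.mem_univ b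
    obtain ⟨ga, hga⟩ := ha
    obtain ⟨gb, hgb⟩ := hb
    refine ⟨gb * ga⁻¹, ?_⟩
    have hga' : ga • ω = a := hga
    have hgb' : gb • ω = b := hgb
    rw [mul_smul, ← hga', inv_smul_smul, hgb']
  -- get the clique
  obtain ⟨C, hCcard, hC⟩ := clique_exists hp Q P.isPGroup' k Ω htransP hΩ
  set CG : Finset G := C.image ((↑) : Q → G) with hCGdef
  have hCGcard : CG.card = p ^ k := by
    rw [hCGdef, Finset.card_image_of_injective _ Subtype.val_injective, hCcard]
  have hCG : ∀ a ∈ CG, ∀ b ∈ CG, a ≠ b → ∀ α : Ω, a • α ≠ b • α := by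
    intro a ha b hb hab α
    rw [hCGdef, Finset.mem_image] at ha hb
    obtain ⟨c, hc, rfl⟩ := ha
    obtain ⟨c', hc', rfl⟩ := hb
    have : c ≠ c' := fun h => hab (by rw [h])
    have := hC c hc c' hc' this α
    rwa [Subgroup.smul_def, Subgroup.smul_def] at this
  -- the product map on S × CG is injective
  have hinj : Set.InjOn (fun q : G × G => q.1 * q.2)
      ((S.toFinset ×ˢ CG : Finset (G × G)) : Set (G × G)) := by
    rintro ⟨a, c⟩ hac ⟨b, d⟩ hbd h
    dsimp only at h
    rw [Finset.mem_coe, Finset.mem_product, Set.mem_toFinset] at hac hbd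
    by_cases hab : a = b
    · subst hab
      rw [mul_left_cancel h]
    · exfalso
      obtain ⟨α, hα⟩ := hS a hac.1 b hbd.1
      by_cases hcd : c = d
      · subst hcd
        exact hab (mul_right_cancel h)
      · apply hCG c hac.2 d hbd.2 hcd (c⁻¹ • α)
        have hdc : d * c⁻¹ = b⁻¹ * a := by
          have : d = b⁻¹ * (a * c) := by rw [h, ← mul_assoc, inv_mul_cancel, one_mul]
          rw [this, mul_assoc, mul_assoc, mul_inv_cancel, mul_one]
        calc c • (c⁻¹ • α) = α := smul_inv_smul c α
          _ = b⁻¹ • (b • α) := (inv_smul_smul b α).symm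
          _ = b⁻¹ • (a • α) := by rw [hα]
          _ = (b⁻¹ * a) • α := (mul_smul _ _ _).symm
          _ = (d * c⁻¹) • α := by rw [hdc]
          _ = d • (c⁻¹ • α) := mul_smul _ _ _
  have hle : (S.toFinset ×ˢ CG).card ≤ Fintype.card G := by
    have := Finset.card_le_card_of_injOn (fun q : G × G => q.1 * q.2)
      (fun a _ => Finset.mem_univ _) hinj
    simpa using this
  rw [Finset.card_product, Set.toFinset_card] at hle
  have hSn : S.ncard = S.toFinset.card := by
    rw [Set.ncard_eq_toFinset_card']
  have hfin : Fintype.card G = p ^ k * Nat.card (MulAction.stabilizer G ω) := by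
    rw [← Nat.card_eq_fintype_card, hcardG]
  rw [hCGcard, ← Set.toFinset_card, ← hSn, hfin] at hle
  have : S.ncard * p ^ k ≤ Nat.card (MulAction.stabilizer G ω) * p ^ k := by
    calc S.ncard * p ^ k ≤ p ^ k * Nat.card (MulAction.stabilizer G ω) := hle
      _ = Nat.card (MulAction.stabilizer G ω) * p ^ k := mul_comm _ _
  exact Nat.le_of_mul_le_mul_right this (pow_pos hp.pos k)
end
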